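/- arXiv:1704.04404 — 3 statements merged into one kernel-verified Lean document; each statement's English description precedes it below -/
import Mathlib

section
/- Let z₁, z₂, z₃ ∈ ℝ² be affinely independent, T := convexHull{z₁, z₂, z₃}, and for j ∈ {1,2,3} let φ_j be the barycentric coordinate of T at z_j. With indices taken cyclically mod 3, let e_j := z_{j+2} − z_{j+1} be the edge vector of the edge S_j of T opposite to z_j, and ν_j the outward unit normal of S_j. Let ε > 0 and let g : ℝ² → ℝ be affine with (constant) gradient ∇g. Set ḡ := (g(z₁) + g(z₂) + g(z₃))/3, b_j := (1/(3ε²))·⟨∇g, e_j⟩, and define τ : ℝ² → ℝ² by τ(x) := b₁·φ₂(x)·φ₃(x)·e₁ + b₂·φ₃(x)·φ₁(x)·e₂ + b₃·φ₁(x)·φ₂(x)·e₃. Then: (i) for each j and every point x of the edge S_j, ⟨τ(x), ν_j⟩ = 0; (ii) for every x ∈ ℝ², ε²·div τ(x) + g(x) − ḡ = 0; (iii) for every x ∈ T, ‖τ(x)‖ ≤ (1/9)·ε⁻²·H_T·osc(g; T), where H_T is the maximal edge length of T and osc(g; T) := sup_T g − inf_T g. -/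
open MeasureTheory
open scoped RealInnerProductSpace

noncomputable section

abbrev E2 : Type := EuclideanSpace ℝ (Fin 2)

/-- The divergence of a vector field on `ℝ²`: the trace of its Fréchet derivative. -/
def div2 (τ : E2 → E2) (x : E2) : ℝ :=
  ∑ i : Fin 2, ⟪fderiv ℝ τ x (EuclideanSpace.single i 1), EuclideanSpace.single i 1⟫

lemma prod3_le (p q r : ℝ) (hp : 0 ≤ p) (hq : 0 ≤ q) (hr : 0 ≤ r) (h : p + q + r = 1) :
    q * r + r * p + p * q ≤ 1 / 3 := by
  nlinarith [sq_nonneg (p - q), sq_nonneg (q - r), sq_nonneg (r - p)]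

lemma repr_lemma (z₁ z₂ z₃ : E2) (hind : AffineIndependent ℝ ![z₁, z₂, z₃]) (x : E2) :
    ∃ c d : ℝ, ∀ φ : E2 →ᵃ[ℝ] ℝ, φ x = φ z₁ + c * (φ z₂ - φ z₁) + d * (φ z₃ - φ z₁) := by
  have hli := (affineIndependent_iff_linearIndependent_vsub ℝ ![z₁, z₂, z₃] 0).mp hind
  have hu : Function.Injective (fun j : Fin 2 => (⟨j.succ, Fin.succ_ne_zero j⟩ :
      {i : Fin 3 // i ≠ 0})) := by
    intro a b h
    simpa [Fin.succ_inj] using congrArg Subtype.val h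
  have hli2 : LinearIndependent ℝ ![z₂ - z₁, z₃ - z₁] := by
    have := hli.comp _ hu
    convert this using 1
    funext j
    fin_cases j <;> simp [Matrix.cons_val_one, Matrix.head_cons]
    rfl
  have hspan : Submodule.span ℝ (Set.range ![z₂ - z₁, z₃ - z₁]) = ⊤ := by
    apply hli2.span_eq_top_of_card_eq_finrank
    simp [finrank_euclideanSpace]
  have hx : x - z₁ ∈ Submodule.span ℝ ({z₂ - z₁, z₃ - z₁} : Set E2) := by
    rw [show ({z₂ - z₁, z₃ - z₁} : Set E2) = Set.range ![z₂ - z₁, z₃ - z₁] by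
      simp [Matrix.range_cons, Matrix.range_empty, Set.pair_comm]]
    rw [hspan]; trivial
  obtain ⟨c, d, hcd⟩ := Submodule.mem_span_pair.mp hx
  refine ⟨c, d, fun φ => ?_⟩
  have h1 : φ x - φ z₁ = φ.linear (x - z₁) := by
    rw [← vsub_eq_sub x z₁, AffineMap.linearMap_vsub]; rfl
  have h2 : φ.linear (z₂ - z₁) = φ z₂ - φ z₁ := by
    rw [← vsub_eq_sub z₂ z₁, AffineMap.linearMap_vsub]; rfl
  have h3 : φ.linear (z₃ - z₁) = φ z₃ - φ z₁ := by
    rw [← vsub_eq_sub z₃ z₁, AffineMap.linearMap_vsub]; rfl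
  have := congrArg φ.linear hcd
  rw [map_add, LinearMap.map_smul, LinearMap.map_smul, h2, h3] at this
  rw [← h1] at this
  simp only [smul_eq_mul] at this
  linarith

lemma trace_smulRight (C : E2 →L[ℝ] ℝ) (e : E2) :
    ∑ i : Fin 2, ⟪(C.smulRight e) (EuclideanSpace.single i 1), EuclideanSpace.single i 1⟫
      = C e := by
  have he : e = e 0 • EuclideanSpace.single (0 : Fin 2) (1:ℝ)
      + e 1 • EuclideanSpace.single (1 : Fin 2) (1:ℝ) := by
    refine PiLp.ext fun i => ?_
    fin_cases i <;> simp [EuclideanSpace.single_apply]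
  calc ∑ i : Fin 2, ⟪(C.smulRight e) (EuclideanSpace.single i 1), EuclideanSpace.single i 1⟫
      = C (EuclideanSpace.single 0 1) * e 0 + C (EuclideanSpace.single 1 1) * e 1 := by
        simp [Fin.sum_univ_two, real_inner_smul_left, EuclideanSpace.inner_single_right]
    _ = C e := by
        conv_rhs => rw [he]
        rw [map_add, C.map_smul, C.map_smul]
        simp [smul_eq_mul]; ring

lemma affine_hasFDerivAt (φ : E2 →ᵃ[ℝ] ℝ) (x : E2) :
    HasFDerivAt φ (LinearMap.toContinuousLinearMap φ.linear) x := by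
  have : (⇑φ) = fun y => (LinearMap.toContinuousLinearMap φ.linear) y + φ 0 := by
    funext y
    rw [AffineMap.decomp φ]; simp
  rw [this]
  exact ((LinearMap.toContinuousLinearMap φ.linear).hasFDerivAt).add_const _

lemma affine_lin_sub (φ : E2 →ᵃ[ℝ] ℝ) (u v : E2) : φ.linear (u - v) = φ u - φ v := by
  rw [← vsub_eq_sub u v, AffineMap.linearMap_vsub]; rfl

set_option maxHeartbeats 1000000 in
/-- The explicit flux `τ_T^f` of (4.7) satisfies (4.6): zero normal trace on `∂T`,
`ε² div τ + (g - ḡ) = 0`, and the pointwise bound `‖τ‖ ≤ (1/9) ε⁻² H_T osc(g;T)`. -/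
theorem stmt5
    (z₁ z₂ z₃ : E2) (hind : AffineIndependent ℝ ![z₁, z₂, z₃])
    (T : Set E2) (hT : T = convexHull ℝ {z₁, z₂, z₃})
    (φ₁ φ₂ φ₃ : E2 →ᵃ[ℝ] ℝ)
    (hφ₁ : φ₁ z₁ = 1 ∧ φ₁ z₂ = 0 ∧ φ₁ z₃ = 0)
    (hφ₂ : φ₂ z₂ = 1 ∧ φ₂ z₃ = 0 ∧ φ₂ z₁ = 0)
    (hφ₃ : φ₃ z₃ = 1 ∧ φ₃ z₁ = 0 ∧ φ₃ z₂ = 0)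
    (e₁ e₂ e₃ : E2) (he₁ : e₁ = z₃ - z₂) (he₂ : e₂ = z₁ - z₃) (he₃ : e₃ = z₂ - z₁)
    (ν₁ ν₂ ν₃ : E2)
    (hν₁u : ‖ν₁‖ = 1) (hν₁o : ⟪ν₁, e₁⟫ = 0) (hν₁s : ⟪ν₁, z₁ - z₂⟫ < 0)
    (hν₂u : ‖ν₂‖ = 1) (hν₂o : ⟪ν₂, e₂⟫ = 0) (hν₂s : ⟪ν₂, z₂ - z₃⟫ < 0)
    (hν₃u : ‖ν₃‖ = 1) (hν₃o : ⟪ν₃, e₃⟫ = 0) (hν₃s : ⟪ν₃, z₃ - z₁⟫ < 0)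
    (ε : ℝ) (hε : 0 < ε)
    (g : E2 →ᵃ[ℝ] ℝ) (G : E2) (hG : ∀ y : E2, g.linear y = ⟪G, y⟫)
    (gbar : ℝ) (hgbar : gbar = (g z₁ + g z₂ + g z₃) / 3)
    (b₁ b₂ b₃ : ℝ)
    (hb₁ : b₁ = 1 / (3 * ε ^ 2) * ⟪G, e₁⟫)
    (hb₂ : b₂ = 1 / (3 * ε ^ 2) * ⟪G, e₂⟫)
    (hb₃ : b₃ = 1 / (3 * ε ^ 2) * ⟪G, e₃⟫)
    (τ : E2 → E2)
    (hτ : τ = fun x => (b₁ * (φ₂ x * φ₃ x)) • e₁ + (b₂ * (φ₃ x * φ₁ x)) • e₂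
        + (b₃ * (φ₁ x * φ₂ x)) • e₃)
    (HT : ℝ) (hHT : HT = max ‖e₁‖ (max ‖e₂‖ ‖e₃‖)) :
    (∀ x ∈ segment ℝ z₂ z₃, ⟪τ x, ν₁⟫ = 0)
    ∧ (∀ x ∈ segment ℝ z₃ z₁, ⟪τ x, ν₂⟫ = 0)
    ∧ (∀ x ∈ segment ℝ z₁ z₂, ⟪τ x, ν₃⟫ = 0)
    ∧ (∀ x : E2, ε ^ 2 * div2 τ x + g x - gbar = 0)
    ∧ (∀ x ∈ T, ‖τ x‖ ≤ 1 / 9 * (ε ^ 2)⁻¹ * HT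
        * (sSup ((fun y => g y) '' T) - sInf ((fun y => g y) '' T))) := by
  obtain ⟨h11, h12, h13⟩ := hφ₁
  obtain ⟨h22, h23, h21⟩ := hφ₂
  obtain ⟨h33, h31, h32⟩ := hφ₃
  have hε2 : (ε : ℝ) ^ 2 ≠ 0 := by positivity
  -- partition of unity and affine reproduction
  have hsum : ∀ x : E2, φ₁ x + φ₂ x + φ₃ x = 1 := by
    intro x
    obtain ⟨c, d, h⟩ := repr_lemma z₁ z₂ z₃ hind x
    rw [h φ₁, h φ₂, h φ₃, h11, h12, h13, h21, h22, h23, h31, h32, h33]; ring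
  have hgx : ∀ x : E2, g x = φ₁ x * g z₁ + φ₂ x * g z₂ + φ₃ x * g z₃ := by
    intro x
    obtain ⟨c, d, h⟩ := repr_lemma z₁ z₂ z₃ hind x
    rw [h φ₁, h φ₂, h φ₃, h g, h11, h12, h13, h21, h22, h23, h31, h32, h33]; ring
  have hGe₁ : ⟪G, e₁⟫ = g z₃ - g z₂ := by rw [← hG, he₁, affine_lin_sub]
  have hGe₂ : ⟪G, e₂⟫ = g z₁ - g z₃ := by rw [← hG, he₂, affine_lin_sub]
  have hGe₃ : ⟪G, e₃⟫ = g z₂ - g z₁ := by rw [← hG, he₃, affine_lin_sub]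
  -- (i) zero normal trace
  have edge1 : ∀ x ∈ segment ℝ z₂ z₃, ⟪τ x, ν₁⟫ = 0 := by
    rintro x ⟨a, b, ha, hb, hab, rfl⟩
    have h1 : φ₁ (a • z₂ + b • z₃) = 0 := by
      rw [Convex.combo_affine_apply hab, h12, h13]; simp
    rw [hτ]
    simp only [h1, mul_zero, zero_mul, zero_smul, add_zero, zero_add]
    rw [real_inner_smul_left, real_inner_comm, hν₁o, mul_zero]
  have edge2 : ∀ x ∈ segment ℝ z₃ z₁, ⟪τ x, ν₂⟫ = 0 := by
    rintro x ⟨a, b, ha, hb, hab, rfl⟩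
    have h1 : φ₂ (a • z₃ + b • z₁) = 0 := by
      rw [Convex.combo_affine_apply hab, h23, h21]; simp
    rw [hτ]
    simp only [h1, mul_zero, zero_mul, zero_smul, add_zero, zero_add]
    rw [real_inner_smul_left, real_inner_comm, hν₂o, mul_zero]
  have edge3 : ∀ x ∈ segment ℝ z₁ z₂, ⟪τ x, ν₃⟫ = 0 := by
    rintro x ⟨a, b, ha, hb, hab, rfl⟩
    have h1 : φ₃ (a • z₁ + b • z₂) = 0 := by
      rw [Convex.combo_affine_apply hab, h31, h32]; simp
    rw [hτ]
    simp only [h1, mul_zero, zero_mul, zero_smul, add_zero, zero_add]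
    rw [real_inner_smul_left, real_inner_comm, hν₃o, mul_zero]
  -- (ii) divergence identity
  have diveq : ∀ x : E2, ε ^ 2 * div2 τ x + g x - gbar = 0 := by
    intro x
    set L₁ := LinearMap.toContinuousLinearMap φ₁.linear with hL₁
    set L₂ := LinearMap.toContinuousLinearMap φ₂.linear with hL₂
    set L₃ := LinearMap.toContinuousLinearMap φ₃.linear with hL₃
    have hd1 := affine_hasFDerivAt φ₁ x
    have hd2 := affine_hasFDerivAt φ₂ x
    have hd3 := affine_hasFDerivAt φ₃ x
    set C₁ : E2 →L[ℝ] ℝ := b₁ • φ₂ x • L₃ + b₁ • φ₃ x • L₂ with hC₁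
    set C₂ : E2 →L[ℝ] ℝ := b₂ • φ₃ x • L₁ + b₂ • φ₁ x • L₃ with hC₂
    set C₃ : E2 →L[ℝ] ℝ := b₃ • φ₁ x • L₂ + b₃ • φ₂ x • L₁ with hC₃
    have ht1 : HasFDerivAt (fun y => (b₁ * (φ₂ y * φ₃ y)) • e₁) (C₁.smulRight e₁) x := by
      have h := ((hd2.mul hd3).const_mul b₁).smul (hasFDerivAt_const e₁ x)
      simp at h
      exact h
    have ht2 : HasFDerivAt (fun y => (b₂ * (φ₃ y * φ₁ y)) • e₂) (C₂.smulRight e₂) x := by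
      have h := ((hd3.mul hd1).const_mul b₂).smul (hasFDerivAt_const e₂ x)
      simp at h
      exact h
    have ht3 : HasFDerivAt (fun y => (b₃ * (φ₁ y * φ₂ y)) • e₃) (C₃.smulRight e₃) x := by
      have h := ((hd1.mul hd2).const_mul b₃).smul (hasFDerivAt_const e₃ x)
      simp at h
      exact h
    have hD : HasFDerivAt τ (C₁.smulRight e₁ + C₂.smulRight e₂ + C₃.smulRight e₃) x := by
      rw [hτ]; exact (ht1.add ht2).add ht3
    have hdiv : div2 τ x = C₁ e₁ + C₂ e₂ + C₃ e₃ := by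
      unfold div2
      rw [hD.fderiv]
      simp only [ContinuousLinearMap.add_apply, inner_add_left, Finset.sum_add_distrib]
      rw [trace_smulRight, trace_smulRight, trace_smulRight]
    have hlv : ∀ (φ : E2 →ᵃ[ℝ] ℝ) (v : E2),
        (LinearMap.toContinuousLinearMap φ.linear) v = φ.linear v := fun _ _ => rfl
    have hC₁e : C₁ e₁ = b₁ * (φ₂ x * (φ₃ z₃ - φ₃ z₂)) + b₁ * (φ₃ x * (φ₂ z₃ - φ₂ z₂)) := by
      rw [hC₁]
      simp only [ContinuousLinearMap.smul_apply, ContinuousLinearMap.add_apply, hL₂, hL₃,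
        hlv, he₁, affine_lin_sub, smul_eq_mul]
    have hC₂e : C₂ e₂ = b₂ * (φ₃ x * (φ₁ z₁ - φ₁ z₃)) + b₂ * (φ₁ x * (φ₃ z₁ - φ₃ z₃)) := by
      rw [hC₂]
      simp only [ContinuousLinearMap.smul_apply, ContinuousLinearMap.add_apply, hL₁, hL₃,
        hlv, he₂, affine_lin_sub, smul_eq_mul]
    have hC₃e : C₃ e₃ = b₃ * (φ₁ x * (φ₂ z₂ - φ₂ z₁)) + b₃ * (φ₂ x * (φ₁ z₂ - φ₁ z₁)) := by
      rw [hC₃]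
      simp only [ContinuousLinearMap.smul_apply, ContinuousLinearMap.add_apply, hL₁, hL₂,
        hlv, he₃, affine_lin_sub, smul_eq_mul]
    have hb₁' : ε ^ 2 * b₁ = (g z₃ - g z₂) / 3 := by
      rw [hb₁, hGe₁]; field_simp
    have hb₂' : ε ^ 2 * b₂ = (g z₁ - g z₃) / 3 := by
      rw [hb₂, hGe₂]; field_simp
    have hb₃' : ε ^ 2 * b₃ = (g z₂ - g z₁) / 3 := by
      rw [hb₃, hGe₃]; field_simp
    have hs := hsum x
    rw [hdiv, hC₁e, hC₂e, hC₃e, h11, h12, h13, h21, h22, h23, h31, h32, h33,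
      hgx x, hgbar]
    linear_combination (φ₂ x - φ₃ x) * hb₁' + (φ₃ x - φ₁ x) * hb₂'
      + (φ₁ x - φ₂ x) * hb₃' + ((g z₁ + g z₂ + g z₃) / 3) * hs
  refine ⟨edge1, edge2, edge3, diveq, ?_⟩
  -- (iii) pointwise bound
  intro x hx
  have hz₁T : z₁ ∈ T := hT ▸ subset_convexHull ℝ _ (by simp)
  have hz₂T : z₂ ∈ T := hT ▸ subset_convexHull ℝ _ (by simp)
  have hz₃T : z₃ ∈ T := hT ▸ subset_convexHull ℝ _ (by simp)
  have hTc : IsCompact T := hT ▸ (Set.toFinite ({z₁, z₂, z₃} : Set E2)).isCompact_convexHull ℝ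
  have hgc : Continuous g := g.continuous_of_finiteDimensional
  have himg : IsCompact ((fun y => g y) '' T) := hTc.image hgc
  set M := sSup ((fun y => g y) '' T) with hM
  set m := sInf ((fun y => g y) '' T) with hm
  have hub : ∀ i ∈ T, g i ≤ M := fun i hi =>
    le_csSup himg.bddAbove ⟨i, hi, rfl⟩
  have hlb : ∀ i ∈ T, m ≤ g i := fun i hi =>
    csInf_le himg.bddBelow ⟨i, hi, rfl⟩
  have hMm : 0 ≤ M - m := by
    have := hub z₁ hz₁T; have := hlb z₁ hz₁T; linarith
  -- nonnegativity of barycentric coordinates on T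
  have hx' : x ∈ convexJoin ℝ {z₁} (convexHull ℝ ({z₂, z₃} : Set E2)) := by
    rw [← convexHull_insert ⟨z₂, Set.mem_insert _ _⟩, ← hT]; exact hx
  rw [convexHull_pair, mem_convexJoin] at hx'
  obtain ⟨u, hu, y, hy, hseg⟩ := hx'
  rw [Set.mem_singleton_iff] at hu
  rw [hu] at hseg
  obtain ⟨a, b, ha, hb, hab, rfl⟩ := hy
  obtain ⟨t, s, ht, hs, hts, rfl⟩ := hseg
  have hval : ∀ φ : E2 →ᵃ[ℝ] ℝ,
      φ (t • z₁ + s • (a • z₂ + b • z₃)) = t * φ z₁ + s * (a * φ z₂ + b * φ z₃) := by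
    intro φ
    rw [Convex.combo_affine_apply hts, Convex.combo_affine_apply hab]
    simp [smul_eq_mul]
  set x := t • z₁ + s • (a • z₂ + b • z₃) with hxdef
  have hp : 0 ≤ φ₁ x := by
    rw [hxdef, hval φ₁, h11, h12, h13]
    have he : t * 1 + s * (a * 0 + b * 0) = t := by ring
    rw [he]; exact ht
  have hq : 0 ≤ φ₂ x := by
    rw [hxdef, hval φ₂, h21, h22, h23]
    have he : t * 0 + s * (a * 1 + b * 0) = s * a := by ring
    rw [he]; exact mul_nonneg hs ha
  have hr : 0 ≤ φ₃ x := by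
    rw [hxdef, hval φ₃, h31, h32, h33]
    have he : t * 0 + s * (a * 0 + b * 1) = s * b := by ring
    rw [he]; exact mul_nonneg hs hb
  have hs1 : φ₁ x + φ₂ x + φ₃ x = 1 := hsum x
  have hprod : φ₂ x * φ₃ x + φ₃ x * φ₁ x + φ₁ x * φ₂ x ≤ 1 / 3 :=
    prod3_le _ _ _ hp hq hr hs1
  -- edge and oscillation bounds
  have habs : ∀ u v : E2, u ∈ T → v ∈ T → |g u - g v| ≤ M - m := by
    intro u v hu hv
    rw [abs_sub_le_iff]
    constructor
    · have := hub u hu; have := hlb v hv; linarith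
    · have := hub v hv; have := hlb u hu; linarith
  set K := 1 / (3 * ε ^ 2) * (M - m) with hK
  have hKnn : 0 ≤ K := by positivity
  have hbK1 : |b₁| ≤ K := by
    rw [hb₁, hGe₁, abs_mul, abs_of_pos (by positivity : (0:ℝ) < 1 / (3 * ε ^ 2))]
    exact mul_le_mul_of_nonneg_left (habs z₃ z₂ hz₃T hz₂T) (by positivity)
  have hbK2 : |b₂| ≤ K := by
    rw [hb₂, hGe₂, abs_mul, abs_of_pos (by positivity : (0:ℝ) < 1 / (3 * ε ^ 2))]
    exact mul_le_mul_of_nonneg_left (habs z₁ z₃ hz₁T hz₃T) (by positivity)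
  have hbK3 : |b₃| ≤ K := by
    rw [hb₃, hGe₃, abs_mul, abs_of_pos (by positivity : (0:ℝ) < 1 / (3 * ε ^ 2))]
    exact mul_le_mul_of_nonneg_left (habs z₂ z₁ hz₂T hz₁T) (by positivity)
  have he₁H : ‖e₁‖ ≤ HT := by rw [hHT]; exact le_max_left _ _
  have he₂H : ‖e₂‖ ≤ HT := by rw [hHT]; exact le_trans (le_max_left _ _) (le_max_right _ _)
  have he₃H : ‖e₃‖ ≤ HT := by rw [hHT]; exact le_trans (le_max_right _ _) (le_max_right _ _)
  have hHnn : 0 ≤ HT := le_trans (norm_nonneg e₁) he₁H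
  have term_bound : ∀ (bb : ℝ) (u v : ℝ) (e : E2), |bb| ≤ K → 0 ≤ u → 0 ≤ v → ‖e‖ ≤ HT →
      ‖(bb * (u * v)) • e‖ ≤ K * (u * v) * HT := by
    intro bb u v e hbb hu hv heH
    rw [norm_smul, Real.norm_eq_abs, abs_mul, abs_mul, abs_of_nonneg hu, abs_of_nonneg hv]
    have h1 : |bb| * (u * v) ≤ K * (u * v) :=
      mul_le_mul_of_nonneg_right hbb (mul_nonneg hu hv)
    exact mul_le_mul h1 heH (norm_nonneg e) (by positivity)
  calc ‖τ x‖ ≤ ‖(b₁ * (φ₂ x * φ₃ x)) • e₁‖ + ‖(b₂ * (φ₃ x * φ₁ x)) • e₂‖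
        + ‖(b₃ * (φ₁ x * φ₂ x)) • e₃‖ := by rw [hτ]; exact norm_add₃_le
    _ ≤ K * (φ₂ x * φ₃ x) * HT + K * (φ₃ x * φ₁ x) * HT + K * (φ₁ x * φ₂ x) * HT := by
        gcongr ?_ + ?_ + ?_
        · exact term_bound _ _ _ _ hbK1 hq hr he₁H
        · exact term_bound _ _ _ _ hbK2 hr hp he₂H
        · exact term_bound _ _ _ _ hbK3 hp hq he₃H
    _ = K * HT * (φ₂ x * φ₃ x + φ₃ x * φ₁ x + φ₁ x * φ₂ x) := by ring
    _ ≤ K * HT * (1 / 3) := by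
        exact mul_le_mul_of_nonneg_left hprod (by positivity)
    _ = 1 / 9 * (ε ^ 2)⁻¹ * HT * (M - m) := by
        rw [hK]; field_simp; ring
end
end

section
/- Let N ≥ 2, let z ∈ ℝ², and for each i ∈ ZMod N let g_i : ℝ² → ℝ be an affine function and t_i ∈ ℝ² a unit vector such that g_i(z + s·t_i) = g_{i−1}(z + s·t_i) for all s ∈ ℝ (consecutive functions agree on the line through z with direction t_i). Let w_i ∈ ℝ² denote the (constant) gradient of g_i minus the gradient of g_{i−1}, and let e₁, e₂ be the standard orthonormal basis of ℝ². Then: (a) Σ_{i ∈ ZMod N} w_i = 0; (b) ⟨w_i, t_i⟩ = 0 for every i; (c) for any two distinct indices a, b with t_a ∈ {e₂, −e₂} and t_b ∈ {e₂, −e₂}, one has |⟨w_a + w_b, e₁⟩| ≤ Σ_{i ≠ a, b} |⟨t_i, e₂⟩|·‖w_i‖. -/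
open MeasureTheory
open scoped RealInnerProductSpace

noncomputable section

lemma key_abs (w t : EuclideanSpace ℝ (Fin 2)) (ht : ‖t‖ = 1) (h : ⟪w, t⟫ = 0) :
    |w 0| = |t 1| * ‖w‖ := by
  have hw2 : ‖w‖^2 = w 0 ^2 + w 1 ^2 := by
    rw [EuclideanSpace.norm_eq, Real.sq_sqrt (by positivity)]; simp [Fin.sum_univ_two]
  have ht2 : t 0 ^2 + t 1 ^2 = 1 := by
    have h2 : ‖t‖^2 = t 0 ^2 + t 1 ^2 := by
      rw [EuclideanSpace.norm_eq, Real.sq_sqrt (by positivity)]; simp [Fin.sum_univ_two]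
    rw [ht] at h2; linarith
  have hinner : w 0 * t 0 + w 1 * t 1 = 0 := by
    simp [PiLp.inner_apply, Fin.sum_univ_two] at h; linarith
  have hsq : (w 0)^2 = (t 1 * ‖w‖)^2 := by
    rw [mul_pow, hw2]
    linear_combination (-(w 0)^2) * ht2 + (w 0 * t 0 - w 1 * t 1) * hinner
  have h3 := congrArg Real.sqrt hsq
  rwa [Real.sqrt_sq_eq_abs, Real.sqrt_sq_eq_abs, abs_mul, abs_norm] at h3

/-- Abstract form of Lemma 9.3: for a cyclic family of affine functions around `z`
with consecutive functions agreeing along lines through `z`, the gradient jumps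
`w_i` sum to zero, are orthogonal to the corresponding edge directions, and the
jumps across the two vertical edges nearly cancel. -/
theorem stmt11
    (N : ℕ) [NeZero N] (hN : 2 ≤ N)
    (z : E2)
    (g : ZMod N → (E2 →ᵃ[ℝ] ℝ))
    (t : ZMod N → E2) (ht : ∀ i, ‖t i‖ = 1)
    (hagree : ∀ (i : ZMod N) (s : ℝ), g i (z + s • t i) = g (i - 1) (z + s • t i))
    (w : ZMod N → E2)
    (hw : ∀ (i : ZMod N) (y : E2), (g i).linear y - (g (i - 1)).linear y = ⟪w i, y⟫) :
    (∑ i : ZMod N, w i) = 0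
    ∧ (∀ i : ZMod N, ⟪w i, t i⟫ = 0)
    ∧ (∀ a b : ZMod N, a ≠ b →
        (t a = EuclideanSpace.single 1 1 ∨ t a = -EuclideanSpace.single 1 1) →
        (t b = EuclideanSpace.single 1 1 ∨ t b = -EuclideanSpace.single 1 1) →
        |⟪w a + w b, EuclideanSpace.single 0 1⟫|
          ≤ ∑ i ∈ Finset.univ \ {a, b},
              |⟪t i, EuclideanSpace.single 1 1⟫| * ‖w i‖) := by
  -- Part (a)
  have ha : (∑ i : ZMod N, w i) = 0 := by
    have hsum : ∀ y : E2, ⟪∑ i : ZMod N, w i, y⟫ = 0 := by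
      intro y
      rw [sum_inner]
      have h1 : ∀ i : ZMod N, ⟪w i, y⟫ = (g i).linear y - (g (i - 1)).linear y :=
        fun i => (hw i y).symm
      simp_rw [h1]
      rw [Finset.sum_sub_distrib]
      have h2 : ∑ i : ZMod N, (g (i - 1)).linear y = ∑ i : ZMod N, (g i).linear y :=
        Fintype.sum_equiv (Equiv.subRight (1 : ZMod N)) _ _ (fun i => rfl)
      rw [h2, sub_self]
    exact inner_self_eq_zero.mp (hsum _)
  -- Part (b)
  have hb : ∀ i : ZMod N, ⟪w i, t i⟫ = 0 := by
    intro i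
    have h0 := hagree i 0
    have h1 := hagree i 1
    simp only [zero_smul, add_zero, one_smul] at h0 h1
    have hv : ∀ f : E2 →ᵃ[ℝ] ℝ, f (z + t i) = f.linear (t i) + f z := by
      intro f
      rw [add_comm z]
      exact f.map_vadd z (t i)
    rw [hv, hv] at h1
    rw [← hw i (t i)]
    linarith
  refine ⟨ha, hb, ?_⟩
  -- Part (c)
  intro a b hab _ _
  have hsplit : w a + w b = -∑ i ∈ Finset.univ \ {a, b}, w i := by
    have h1 : (∑ i ∈ Finset.univ \ {a, b}, w i) + ∑ i ∈ ({a, b} : Finset (ZMod N)), w i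
        = ∑ i : ZMod N, w i := Finset.sum_sdiff (Finset.subset_univ _)
    rw [Finset.sum_pair hab, ha] at h1
    exact eq_neg_of_add_eq_zero_right h1
  rw [hsplit, inner_neg_left, sum_inner, abs_neg]
  calc |∑ i ∈ Finset.univ \ {a, b}, ⟪w i, EuclideanSpace.single 0 1⟫|
      ≤ ∑ i ∈ Finset.univ \ {a, b}, |⟪w i, EuclideanSpace.single 0 (1:ℝ)⟫| :=
        Finset.abs_sum_le_sum_abs _ _
    _ = ∑ i ∈ Finset.univ \ {a, b}, |⟪t i, EuclideanSpace.single 1 1⟫| * ‖w i‖ := by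
        refine Finset.sum_congr rfl (fun i _ => ?_)
        have h1 : ⟪w i, EuclideanSpace.single 0 (1:ℝ)⟫ = w i 0 := by
          simp [EuclideanSpace.inner_single_right]
        have h2 : ⟪t i, EuclideanSpace.single 1 (1:ℝ)⟫ = t i 1 := by
          simp [EuclideanSpace.inner_single_right]
        rw [h1, h2]
        exact key_abs (w i) (t i) (ht i) (hb i)
end
end

section
/- Let z, z', z* ∈ ℝ² be affinely independent, T := convexHull{z, z', z*}, let φ_z and φ_{z'} be the barycentric coordinates of T at z and z' respectively, μ := (z − z')/‖z − z'‖, d* := 2·area(T)/‖z − z'‖, and let κ ∈ ℝ. Define the vector field τ(x) := κ·(d*)⁻¹·(φ_z(x) + φ_{z'}(x))·μ. Then: (a) τ is differentiable on ℝ² with divergence identically 0; (b) for every x in the edge [z', z], ⟨τ(x), ν⟩ = 0, where ν is the outward unit normal of the edge [z', z] of T; (c) for every x in the edge [z, z*] with outward unit normal ν'', one has ‖z* − z‖·⟨τ(x), ν''⟩ = κ·(φ_z(x) − φ_{z'}(x)), and for every x in the edge [z', z*] with outward unit normal ν''', one has ‖z* − z'‖·⟨τ(x), ν'''⟩ = κ·(φ_z(x)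 − φ_{z'}(x)). -/
open MeasureTheory
open scoped RealInnerProductSpace

noncomputable section

/- ### Auxiliary lemmas -/

lemma aux_inner_expand (x y : E2) : ⟪x, y⟫ = x 0 * y 0 + x 1 * y 1 := by
  simp [PiLp.inner_apply, Fin.sum_univ_two, RCLike.inner_apply, mul_comm]

lemma aux_norm_sq_expand (x : E2) : ‖x‖ ^ 2 = x 0 * x 0 + x 1 * x 1 := by
  rw [← real_inner_self_eq_norm_sq, aux_inner_expand]

lemma aux_dec (y : E2) :
    y = y 0 • EuclideanSpace.single 0 1 + y 1 • EuclideanSpace.single 1 1 := by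
  ext i
  fin_cases i <;> simp [EuclideanSpace.single_apply]

lemma aux_tri_prod_vol :
    volume {p : ℝ × ℝ | 0 ≤ p.1 ∧ 0 ≤ p.2 ∧ p.1 + p.2 ≤ 1} = ENNReal.ofReal (1/2) := by
  have hmeas : MeasurableSet {p : ℝ × ℝ | 0 ≤ p.1 ∧ 0 ≤ p.2 ∧ p.1 + p.2 ≤ 1} := by
    apply MeasurableSet.inter
    · exact measurableSet_le measurable_const measurable_fst
    apply MeasurableSet.inter
    · exact measurableSet_le measurable_const measurable_snd
    · exact measurableSet_le (measurable_fst.add measurable_snd) measurable_const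
  rw [MeasureTheory.Measure.volume_eq_prod, MeasureTheory.Measure.prod_apply hmeas]
  have hslice : ∀ x : ℝ, (Prod.mk x ⁻¹' {p : ℝ × ℝ | 0 ≤ p.1 ∧ 0 ≤ p.2 ∧ p.1 + p.2 ≤ 1})
      = if 0 ≤ x then Set.Icc 0 (1 - x) else ∅ := by
    intro x
    ext y
    by_cases hx : 0 ≤ x <;> simp [hx, Set.mem_Icc] <;> intro _ <;> constructor <;> intro <;> linarith
  have hfun : (fun x => volume (Prod.mk x ⁻¹' {p : ℝ × ℝ | 0 ≤ p.1 ∧ 0 ≤ p.2 ∧ p.1 + p.2 ≤ 1}))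
      = Set.indicator (Set.Icc (0:ℝ) 1) (fun x => ENNReal.ofReal (1 - x)) := by
    funext x
    rw [hslice]
    by_cases hx : 0 ≤ x
    · by_cases hx1 : x ≤ 1
      · simp [hx, Real.volume_Icc, Set.indicator_of_mem (Set.mem_Icc.2 ⟨hx, hx1⟩)]
      · have h2 : (1:ℝ) - x ≤ 0 := by linarith
        simp [hx, Real.volume_Icc, Set.indicator_of_notMem, hx1,
          ENNReal.ofReal_eq_zero.2 (by linarith : 1 - x - 0 ≤ 0), ENNReal.ofReal_eq_zero.2 h2]
    · simp [hx, Set.indicator_of_notMem, fun (h : x ∈ Set.Icc (0:ℝ) 1) => hx h.1]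
  rw [hfun]
  show ∫⁻ x, (Set.Icc (0:ℝ) 1).indicator (fun x => ENNReal.ofReal (1 - x)) x = _
  rw [lintegral_indicator measurableSet_Icc]
  rw [← MeasureTheory.ofReal_integral_eq_lintegral_ofReal]
  · congr 1
    rw [MeasureTheory.integral_Icc_eq_integral_Ioc,
      ← intervalIntegral.integral_of_le (by norm_num : (0:ℝ) ≤ 1)]
    have h3 : ∫ x in (0:ℝ)..1, (1 - x) = 1/2 := by
      rw [intervalIntegral.integral_sub (intervalIntegrable_const (c := 1))
        intervalIntegral.intervalIntegrable_id, integral_id]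
      simp
      norm_num
    rw [h3]
  · exact (continuous_const.sub continuous_id).integrableOn_Icc
  · exact (ae_restrict_iff' measurableSet_Icc).2 (ae_of_all _ (fun x hx => by
      simp only [Pi.zero_apply]; linarith [hx.2]))

lemma aux_std_tri_vol :
    volume {x : E2 | 0 ≤ x 0 ∧ 0 ≤ x 1 ∧ x 0 + x 1 ≤ 1} = ENNReal.ofReal (1/2) := by
  have h1 := EuclideanSpace.volume_preserving_symm_measurableEquiv_toLp (Fin 2)
  have h2 := volume_preserving_finTwoArrow ℝ
  have hmeas : MeasurableSet {p : ℝ × ℝ | 0 ≤ p.1 ∧ 0 ≤ p.2 ∧ p.1 + p.2 ≤ 1} := by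
    apply MeasurableSet.inter
    · exact measurableSet_le measurable_const measurable_fst
    apply MeasurableSet.inter
    · exact measurableSet_le measurable_const measurable_snd
    · exact measurableSet_le (measurable_fst.add measurable_snd) measurable_const
  have hcomp := (h2.comp h1).measure_preimage hmeas.nullMeasurableSet
  have hset : ((MeasurableEquiv.finTwoArrow ∘ (MeasurableEquiv.toLp 2 (Fin 2 → ℝ)).symm) ⁻¹'
      {p : ℝ × ℝ | 0 ≤ p.1 ∧ 0 ≤ p.2 ∧ p.1 + p.2 ≤ 1})
      = {x : E2 | 0 ≤ x 0 ∧ 0 ≤ x 1 ∧ x 0 + x 1 ≤ 1} := by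
    ext x
    simp [MeasurableEquiv.finTwoArrow]
  rw [hset] at hcomp
  rw [hcomp, aux_tri_prod_vol]

lemma aux_std_tri_hull :
    {x : E2 | 0 ≤ x 0 ∧ 0 ≤ x 1 ∧ x 0 + x 1 ≤ 1}
      = convexHull ℝ {0, EuclideanSpace.single 0 1, EuclideanSpace.single 1 1} := by
  apply Set.Subset.antisymm
  · intro x hx
    obtain ⟨h0, h1, hs⟩ := hx
    have hC : Convex ℝ (convexHull ℝ
        ({0, EuclideanSpace.single 0 1, EuclideanSpace.single 1 1} : Set E2)) :=
      convex_convexHull ℝ _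
    have hm0 : (0:E2) ∈ convexHull ℝ
        ({0, EuclideanSpace.single 0 1, EuclideanSpace.single 1 1} : Set E2) :=
      subset_convexHull ℝ _ (by simp)
    have hm1 : (EuclideanSpace.single 0 1 : E2) ∈ convexHull ℝ
        ({0, EuclideanSpace.single 0 1, EuclideanSpace.single 1 1} : Set E2) :=
      subset_convexHull ℝ _ (by simp)
    have hm2 : (EuclideanSpace.single 1 1 : E2) ∈ convexHull ℝ
        ({0, EuclideanSpace.single 0 1, EuclideanSpace.single 1 1} : Set E2) :=
      subset_convexHull ℝ _ (by simp)
    set t := x 0 + x 1 with ht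
    have hxdec : x = x 0 • (EuclideanSpace.single 0 1 : E2) + x 1 • EuclideanSpace.single 1 1 :=
      aux_dec x
    by_cases h : t = 0
    · have hx0 : x 0 = 0 := by linarith
      have hx1 : x 1 = 0 := by linarith
      have hz : x = 0 := by rw [hxdec, hx0, hx1]; simp
      rw [hz]; exact hm0
    · have htpos : 0 < t := lt_of_le_of_ne (by positivity) (Ne.symm h)
      have hp : (x 0 / t) • (EuclideanSpace.single 0 1 : E2) + (x 1 / t) • EuclideanSpace.single 1 1
          ∈ convexHull ℝ ({0, EuclideanSpace.single 0 1, EuclideanSpace.single 1 1} : Set E2) :=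
        hC hm1 hm2 (by positivity) (by positivity) (by field_simp; rw [ht])
      have hx' : (1 - t) • (0:E2) + t •
          ((x 0 / t) • (EuclideanSpace.single 0 1 : E2) + (x 1 / t) • EuclideanSpace.single 1 1)
          = x := by
        rw [smul_zero, zero_add, smul_add, smul_smul, smul_smul,
          mul_div_cancel₀ _ h, mul_div_cancel₀ _ h, ← hxdec]
      rw [← hx']
      exact hC hm0 hp (by linarith) (le_of_lt htpos) (by ring)
  · apply convexHull_min
    · intro p hp
      simp only [Set.mem_insert_iff, Set.mem_singleton_iff] at hp
      rcases hp with rfl | rfl | rfl <;> refine ⟨?_, ?_, ?_⟩ <;>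
        simp [EuclideanSpace.single_apply]
    · intro p hp q hq a b ha hb hab
      obtain ⟨hp0, hp1, hps⟩ := hp
      obtain ⟨hq0, hq1, hqs⟩ := hq
      refine ⟨?_, ?_, ?_⟩ <;> simp only [PiLp.add_apply, PiLp.smul_apply, smul_eq_mul] <;> nlinarith

lemma aux_tri_vol_zero (u v : E2) :
    volume (convexHull ℝ {(0:E2), u, v}) = ENNReal.ofReal (|u 0 * v 1 - u 1 * v 0| / 2) := by
  set b := (EuclideanSpace.basisFun (Fin 2) ℝ).toBasis with hb
  have hbi : ∀ i, b i = EuclideanSpace.single i 1 := by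
    intro i
    rw [hb, OrthonormalBasis.coe_toBasis, EuclideanSpace.basisFun_apply]
  set f : E2 →ₗ[ℝ] E2 := b.constr ℝ ![u, v] with hf
  have hfe0 : f (EuclideanSpace.single 0 1) = u := by
    rw [← hbi 0]; exact b.constr_basis ℝ ![u, v] 0
  have hfe1 : f (EuclideanSpace.single 1 1) = v := by
    rw [← hbi 1]; exact b.constr_basis ℝ ![u, v] 1
  have himg : f '' (convexHull ℝ {0, EuclideanSpace.single 0 1, EuclideanSpace.single 1 1})
      = convexHull ℝ {(0:E2), u, v} := by
    rw [f.image_convexHull]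
    congr 1
    simp [Set.image_insert_eq, hfe0, hfe1]
  have hdet : LinearMap.det f = u 0 * v 1 - u 1 * v 0 := by
    rw [← LinearMap.det_toMatrix b f, Matrix.det_fin_two]
    have h : ∀ i j, LinearMap.toMatrix b b f i j = (![u, v] j) i := by
      intro i j
      rw [LinearMap.toMatrix_apply, Module.Basis.constr_basis]
      rw [hb, OrthonormalBasis.coe_toBasis_repr_apply, EuclideanSpace.basisFun_repr]
    rw [h 0 0, h 1 1, h 0 1, h 1 0]
    simp only [Matrix.cons_val_zero, Matrix.cons_val_one, Matrix.head_cons]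
    ring
  rw [← himg, Measure.addHaar_image_linearMap, ← aux_std_tri_hull, aux_std_tri_vol, hdet,
    ← ENNReal.ofReal_mul (abs_nonneg _)]
  congr 1
  ring

lemma aux_tri_vol (z z' zstar : E2) :
    volume (convexHull ℝ {z, z', zstar})
      = ENNReal.ofReal (|(z - z') 0 * (zstar - z') 1 - (z - z') 1 * (zstar - z') 0| / 2) := by
  set u := z - z'
  set v := zstar - z'
  set g : E2 →ᵃ[ℝ] E2 := AffineMap.const ℝ E2 z' + AffineMap.id ℝ E2 with hg
  have hgapp : ∀ x, g x = z' + x := fun x => rfl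
  have himg : g '' (convexHull ℝ {(0:E2), u, v}) = convexHull ℝ {z, z', zstar} := by
    rw [AffineMap.image_convexHull]
    congr 1
    simp only [Set.image_insert_eq, Set.image_singleton, hgapp]
    rw [add_zero, show z' + u = z by simp [u], show z' + v = zstar by simp [v],
      Set.insert_comm]
  have hpre : g '' (convexHull ℝ {(0:E2), u, v})
      = (fun x => -z' + x) ⁻¹' (convexHull ℝ {(0:E2), u, v}) := by
    ext x
    constructor
    · rintro ⟨a, ha, rfl⟩
      simpa [hgapp, neg_add_cancel_left] using ha
    · intro h
      exact ⟨-z' + x, h, by simp [hgapp, add_neg_cancel_left]⟩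
  rw [← himg, hpre, measure_preimage_add, aux_tri_vol_zero]

lemma aux_det_ne_zero {z z' zstar : E2} (hind : AffineIndependent ℝ ![z, z', zstar]) :
    (z - z') 0 * (zstar - z') 1 - (z - z') 1 * (zstar - z') 0 ≠ 0 := by
  intro hΔ
  rw [affineIndependent_iff_not_collinear_set] at hind
  apply hind
  set u := z - z' with hu
  set v := zstar - z' with hv
  rw [collinear_iff_of_mem (show z' ∈ ({z, z', zstar} : Set E2) by simp)]
  have hmem : ∀ c : ℝ, ∀ p : E2, p - z' = c • u → p = c • u +ᵥ z' := by
    intro c p h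
    rw [vadd_eq_add, ← h]
    abel
  by_cases huz : u = 0
  · refine ⟨v, ?_⟩
    intro p hp
    rcases hp with rfl | rfl | rfl
    · exact ⟨0, by rw [vadd_eq_add, zero_smul, zero_add, ← sub_eq_zero]; exact huz⟩
    · exact ⟨0, by rw [vadd_eq_add, zero_smul, zero_add]⟩
    · exact ⟨1, by rw [vadd_eq_add, one_smul, hv]; abel⟩
  · refine ⟨u, ?_⟩
    have hcoord : ∃ c : ℝ, v = c • u := by
      by_cases h0 : u 0 ≠ 0
      · refine ⟨v 0 / u 0, ?_⟩
        ext i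
        fin_cases i
        · show v 0 = (v 0 / u 0) * u 0
          rw [div_mul_cancel₀ _ h0]
        · show v 1 = (v 0 / u 0) * u 1
          rw [div_mul_eq_mul_div, eq_div_iff h0]
          linear_combination hΔ
      · push_neg at h0
        have h1 : u 1 ≠ 0 := by
          intro h1
          apply huz
          ext i; fin_cases i
          · exact h0
          · exact h1
        refine ⟨v 1 / u 1, ?_⟩
        ext i
        fin_cases i
        · show v 0 = (v 1 / u 1) * u 0
          rw [div_mul_eq_mul_div, eq_div_iff h1]
          linear_combination -hΔ
        · show v 1 = (v 1 / u 1) * u 1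
          rw [div_mul_cancel₀ _ h1]
    obtain ⟨c, hc⟩ := hcoord
    intro p hp
    rcases hp with rfl | rfl | rfl
    · exact ⟨1, hmem 1 _ (by rw [one_smul, ← hu])⟩
    · exact ⟨0, by rw [vadd_eq_add, zero_smul, zero_add]⟩
    · exact ⟨c, hmem c _ (by rw [← hc, ← hv])⟩

lemma aux_normal_eq (w ν : E2) (hν1 : ‖ν‖ = 1) (hν2 : ⟪ν, w⟫ = 0) (u : E2) :
    ⟪u, ν⟫ * (ν 0 * w 1 - ν 1 * w 0) = u 0 * w 1 - u 1 * w 0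
    ∧ (ν 0 * w 1 - ν 1 * w 0) ^ 2 = ‖w‖ ^ 2 := by
  have h1 : ν 0 * ν 0 + ν 1 * ν 1 = 1 := by
    have h := aux_norm_sq_expand ν
    rw [hν1] at h; linarith [h]
  have h2 : ν 0 * w 0 + ν 1 * w 1 = 0 := by rw [← aux_inner_expand, hν2]
  rw [aux_inner_expand, aux_norm_sq_expand]
  constructor
  · linear_combination (u 1 * ν 0 - u 0 * ν 1) * h2 + (u 0 * w 1 - u 1 * w 0) * h1
  · linear_combination (w 0 * w 0 + w 1 * w 1) * h1 - (ν 0 * w 0 + ν 1 * w 1) * h2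

lemma aux_affine_hasFDerivAt (ψ : E2 →ᵃ[ℝ] ℝ) (x : E2) :
    HasFDerivAt ψ (LinearMap.toContinuousLinearMap ψ.linear) x := by
  have hdecomp : (ψ : E2 → ℝ) = fun y => (LinearMap.toContinuousLinearMap ψ.linear) y + ψ 0 := by
    funext y
    rw [ψ.decomp]
    simp
  rw [hdecomp]
  exact (LinearMap.toContinuousLinearMap ψ.linear).hasFDerivAt.add_const _

lemma aux_tau_hasFDerivAt (φz φz' : E2 →ᵃ[ℝ] ℝ) (c : ℝ) (μ : E2) (x : E2) :
    HasFDerivAt (fun y => (c * (φz y + φz' y)) • μ)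
      (ContinuousLinearMap.smulRight
        (c • (LinearMap.toContinuousLinearMap φz.linear
          + LinearMap.toContinuousLinearMap φz'.linear)) μ) x := by
  have h1 : HasFDerivAt (fun y => c * (φz y + φz' y))
      (c • (LinearMap.toContinuousLinearMap φz.linear
        + LinearMap.toContinuousLinearMap φz'.linear)) x :=
    ((aux_affine_hasFDerivAt φz x).add (aux_affine_hasFDerivAt φz' x)).const_mul c
  exact h1.smul_const μ

/-- Single-triangle content of Lemma 6.1 for the divergence-free short-edge
correction `τ_S^J` of (6.2): `div τ_S^J = 0`, its normal component vanishes on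
the shared short edge `S = [z', z]`, and on each remaining edge `S''` the trace
identity `|S''| τ_S^J · ν = κ_S (φ_z − φ_{z'})` holds. -/
theorem stmt13
    (z z' zstar : E2) (hind : AffineIndependent ℝ ![z, z', zstar])
    (T : Set E2) (hT : T = convexHull ℝ {z, z', zstar})
    (φz : E2 →ᵃ[ℝ] ℝ) (hφz1 : φz z = 1) (hφz2 : φz z' = 0) (hφz3 : φz zstar = 0)
    (φz' : E2 →ᵃ[ℝ] ℝ) (hφz'1 : φz' z' = 1) (hφz'2 : φz' z = 0) (hφz'3 : φz' zstar = 0)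
    (μ : E2) (hμ : μ = ‖z - z'‖⁻¹ • (z - z'))
    (dstar : ℝ) (hdstar : dstar = 2 * (volume T).toReal / ‖z - z'‖)
    (κ : ℝ)
    (τ : E2 → E2) (hτ : τ = fun x => (κ * dstar⁻¹ * (φz x + φz' x)) • μ)
    (ν : E2) (hν1 : ‖ν‖ = 1) (hν2 : ⟪ν, z - z'⟫ = 0) (hν3 : ⟪ν, zstar - z'⟫ < 0)
    (ν'' : E2) (hν''1 : ‖ν''‖ = 1) (hν''2 : ⟪ν'', zstar - z⟫ = 0)
    (hν''3 : ⟪ν'', z' - z⟫ < 0)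
    (ν''' : E2) (hν'''1 : ‖ν'''‖ = 1) (hν'''2 : ⟪ν''', zstar - z'⟫ = 0)
    (hν'''3 : ⟪ν''', z - z'⟫ < 0) :
    (Differentiable ℝ τ ∧ ∀ x : E2, div2 τ x = 0)
    ∧ (∀ x ∈ segment ℝ z' z, ⟪τ x, ν⟫ = 0)
    ∧ (∀ x ∈ segment ℝ z zstar, ‖zstar - z‖ * ⟪τ x, ν''⟫ = κ * (φz x - φz' x))
    ∧ (∀ x ∈ segment ℝ z' zstar, ‖zstar - z'‖ * ⟪τ x, ν'''⟫ = κ * (φz x - φz' x)) := by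
  subst hT hτ hμ
  set u := z - z' with hu
  set v := zstar - z' with hv
  set w := zstar - z with hw
  set Δ := u 0 * v 1 - u 1 * v 0 with hΔdef
  have hΔ : Δ ≠ 0 := aux_det_ne_zero hind
  have hzz' : z ≠ z' := by
    intro h
    exact (by decide : ¬(0:Fin 3) = 1)
      (hind.injective (show ![z, z', zstar] 0 = ![z, z', zstar] 1 by simp [h]))
  have hzzs : zstar ≠ z := by
    intro h
    exact (by decide : ¬(2:Fin 3) = 0)
      (hind.injective (show ![z, z', zstar] 2 = ![z, z', zstar] 0 by simp [h]))
  have hzs' : zstar ≠ z' := by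
    intro h
    exact (by decide : ¬(2:Fin 3) = 1)
      (hind.injective (show ![z, z', zstar] 2 = ![z, z', zstar] 1 by simp [h]))
  have hune : u ≠ 0 := sub_ne_zero.mpr hzz'
  have hnu : ‖u‖ ≠ 0 := norm_ne_zero_iff.mpr hune
  have hwne : w ≠ 0 := sub_ne_zero.mpr hzzs
  have hnw : ‖w‖ ≠ 0 := norm_ne_zero_iff.mpr hwne
  have hvne : v ≠ 0 := sub_ne_zero.mpr hzs'
  have hnv : ‖v‖ ≠ 0 := norm_ne_zero_iff.mpr hvne
  have hvol : (volume (convexHull ℝ {z, z', zstar})).toReal = |Δ| / 2 := by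
    rw [aux_tri_vol]
    exact ENNReal.toReal_ofReal (by positivity)
  have hd : dstar = |Δ| / ‖u‖ := by rw [hdstar, hvol]; ring
  have habs : |Δ| ≠ 0 := abs_ne_zero.mpr hΔ
  have hdne : dstar ≠ 0 := by rw [hd]; exact div_ne_zero habs hnu
  have hc : ∀ (y : E2) (i : Fin 2), ⟪y, (EuclideanSpace.single i 1 : E2)⟫ = y i := by
    intro y i
    rw [aux_inner_expand]
    fin_cases i <;> simp [EuclideanSpace.single_apply]
  have hwc : ∀ i : Fin 2, w i = v i - u i := by
    intro i
    rw [hw, hv, hu]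
    show (zstar - z) i = (zstar - z') i - (z - z') i
    simp only [PiLp.sub_apply]
    ring
  clear_value u v w Δ
  refine ⟨⟨?_, ?_⟩, ?_, ?_, ?_⟩
  · -- differentiability
    exact fun x => (aux_tau_hasFDerivAt φz φz' (κ * dstar⁻¹) (‖u‖⁻¹ • u) x).differentiableAt
  · -- divergence zero
    intro x
    have hfd := aux_tau_hasFDerivAt φz φz' (κ * dstar⁻¹) (‖u‖⁻¹ • u) x
    simp only [div2, hfd.fderiv, Fin.sum_univ_two, ContinuousLinearMap.smulRight_apply,
      real_inner_smul_left, hc]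
    set D := (κ * dstar⁻¹) • (LinearMap.toContinuousLinearMap φz.linear
      + LinearMap.toContinuousLinearMap φz'.linear) with hD
    have hDy : ∀ y : E2, D (EuclideanSpace.single 0 1) * y 0
        + D (EuclideanSpace.single 1 1) * y 1 = D y := by
      intro y
      conv_rhs => rw [aux_dec y]
      rw [map_add, _root_.map_smul, _root_.map_smul]
      simp only [smul_eq_mul]
      ring
    simp only [PiLp.smul_apply, smul_eq_mul]
    have hlin : ∀ ψ : E2 →ᵃ[ℝ] ℝ, ψ.linear u = ψ z - ψ z' := by
      intro ψ
      rw [hu, ← vsub_eq_sub z z', ψ.linearMap_vsub, vsub_eq_sub]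
    have hDu0 : D u = 0 := by
      simp only [hD, ContinuousLinearMap.coe_smul', Pi.smul_apply,
        ContinuousLinearMap.add_apply, LinearMap.coe_toContinuousLinearMap',
        hlin φz, hlin φz', hφz1, hφz2, hφz'1, hφz'2, smul_eq_mul]
      ring
    linear_combination ‖u‖⁻¹ * hDy u + ‖u‖⁻¹ * hDu0
  · -- short edge
    intro x _
    show ⟪(κ * dstar⁻¹ * (φz x + φz' x)) • (‖u‖⁻¹ • u), ν⟫ = 0
    rw [real_inner_smul_left, real_inner_smul_left,
      show (inner ℝ u ν : ℝ) = 0 by rw [real_inner_comm]; exact hν2]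
    ring
  · -- edge [z, zstar]
    rintro x ⟨a, b, ha, hb, hab, rfl⟩
    set x := a • z + b • zstar with hx
    clear_value x
    have h0 : φz' x = 0 := by
      rw [hx, Convex.combo_affine_apply hab, hφz'2, hφz'3]
      simp
    obtain ⟨hA1, hA2⟩ := aux_normal_eq w ν'' hν''1 hν''2 u
    have hdet_uw : u 0 * w 1 - u 1 * w 0 = Δ := by
      rw [hwc 0, hwc 1, hΔdef]
      ring
    rw [hdet_uw] at hA1
    have hApos : 0 < ⟪u, ν''⟫ := by
      have h3 := hν''3
      rw [show z' - z = -u by rw [hu]; abel, inner_neg_right] at h3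
      rw [real_inner_comm]
      linarith
    have hkey : ‖w‖ * ⟪u, ν''⟫ = |Δ| := by
      have hsq : (‖w‖ * ⟪u, ν''⟫) ^ 2 = |Δ| ^ 2 := by
        rw [mul_pow, ← hA2, sq_abs]
        linear_combination (inner ℝ u ν'' * (ν'' 0 * w 1 - ν'' 1 * w 0) + Δ) * hA1
      exact (sq_eq_sq₀ (mul_nonneg (norm_nonneg w) (le_of_lt hApos)) (abs_nonneg Δ)).mp hsq
    show ‖w‖ * ⟪(κ * dstar⁻¹ * (φz x + φz' x)) • (‖u‖⁻¹ • u), ν''⟫ = κ * (φz x - φz' x)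
    rw [h0, add_zero, sub_zero, real_inner_smul_left, real_inner_smul_left]
    have hscal : ‖w‖ * (dstar⁻¹ * (‖u‖⁻¹ * ⟪u, ν''⟫)) = 1 := by
      rw [hd, inv_div]
      field_simp
      linear_combination hkey
    linear_combination (κ * φz x) * hscal
  · -- edge [z', zstar]
    rintro x ⟨a, b, ha, hb, hab, rfl⟩
    set x := a • z' + b • zstar with hx
    clear_value x
    have h0 : φz x = 0 := by
      rw [hx, Convex.combo_affine_apply hab, hφz2, hφz3]
      simp
    obtain ⟨hA1, hA2⟩ := aux_normal_eq v ν''' hν'''1 hν'''2 u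
    rw [← hΔdef] at hA1
    have hAneg : ⟪u, ν'''⟫ < 0 := by
      rw [real_inner_comm]
      exact hν'''3
    have hkey : ‖v‖ * ⟪u, ν'''⟫ = -|Δ| := by
      have hsq : (-(‖v‖ * ⟪u, ν'''⟫)) ^ 2 = |Δ| ^ 2 := by
        rw [neg_sq, mul_pow, ← hA2, sq_abs]
        linear_combination (inner ℝ u ν''' * (ν''' 0 * v 1 - ν''' 1 * v 0) + Δ) * hA1
      have h5 : (0:ℝ) ≤ -(‖v‖ * ⟪u, ν'''⟫) := by
        rw [← mul_neg]
        exact mul_nonneg (norm_nonneg v) (by linarith)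
      have h4 := (sq_eq_sq₀ h5 (abs_nonneg Δ)).mp hsq
      linarith
    show ‖v‖ * ⟪(κ * dstar⁻¹ * (φz x + φz' x)) • (‖u‖⁻¹ • u), ν'''⟫ = κ * (φz x - φz' x)
    rw [h0, zero_add, zero_sub, real_inner_smul_left, real_inner_smul_left]
    have hscal : ‖v‖ * (dstar⁻¹ * (‖u‖⁻¹ * ⟪u, ν'''⟫)) = -1 := by
      rw [hd, inv_div]
      field_simp
      linear_combination hkey
    linear_combination (κ * φz' x) * hscal
end
end
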